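/- Define 𝓵(α) = √(2^(1−α) + 2^(2−α/2)) − √(2^(1−α)·3^α·6^(−α/2) + 4^(1−α)·3^(α/2)·2^(α/2)) for α ∈ [0,2). Then 𝓵(0) = 0, 𝓵 is increasing on [0,2), and 𝓵(α) > 0 for every α ∈ (0,2). -/

import Mathlib

open Real

/-- The difference `𝓵(α)` between the `v`-value at the planar central
configuration and at the tetrahedral one. -/
noncomputable def vDiff (α : ℝ) : ℝ :=
  Real.sqrt ((2:ℝ) ^ (1 - α) + (2:ℝ) ^ (2 - α/2)) -
    Real.sqrt ((2:ℝ) ^ (1 - α) * (3:ℝ) ^ α * (6:ℝ) ^ (-(α/2)) +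
      (4:ℝ) ^ (1 - α) * (3:ℝ) ^ (α/2) * (2:ℝ) ^ (α/2))

set_option maxHeartbeats 800000

namespace VDiffAux

lemma exp_sq (x : ℝ) : Real.exp x ^ 2 = Real.exp (x + x) := by
  rw [Real.exp_add]; ring

lemma log_three_bounds : 1.09859 < Real.log 3 ∧ Real.log 3 < 1.09864 := by
  have h := Real.abs_log_sub_add_sum_range_le (x := (1/4:ℝ)) (by rw [abs_of_nonneg] <;> norm_num) 7
  rw [abs_of_nonneg (by norm_num : (0:ℝ) ≤ 1/4)] at h
  rw [abs_le] at h
  simp only [Finset.sum_range_succ, Finset.sum_range_zero] at h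
  norm_num at h
  have h34 : Real.log (3/4) = Real.log 3 - 2 * Real.log 2 := by
    rw [Real.log_div (by norm_num) (by norm_num),
      show (4:ℝ) = 2^2 by norm_num, Real.log_pow]
    push_cast; ring
  rw [h34] at h
  have l2a := Real.log_two_gt_d9
  have l2b := Real.log_two_lt_d9
  constructor <;> nlinarith [h.1, h.2]

lemma core (L2 L3 u : ℝ) (hu0 : 0 ≤ u) (hu1 : u ≤ 1)
    (l2a : 0.6931471803 < L2) (l2b : L2 < 0.6931471808)
    (l3a : 1.09859 < L3) (l3b : L3 < 1.09864)
    (hhalf : Real.exp (-L2) = 1/2) :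
    L2^2 * (Real.exp (-(u*L2)) + 1)^2 <
      3*(3*L2-L3)^2/4 * (Real.exp (-(u*(3*L2-L3))) + 2 * Real.exp (-(u*(2*L2-L3)))) := by
  have hL2 : (0:ℝ) < L2 := by linarith
  have hca : (0.9808:ℝ) < 3*L2 - L3 := by linarith
  have hcb : 3*L2 - L3 < (0.9809:ℝ) := by linarith
  have hda : (0:ℝ) < 2*L2 - L3 := by linarith
  have hdb : 2*L2 - L3 < (0.28771:ℝ) := by linarith
  set c := 3*L2 - L3 with hcdef
  set d := 2*L2 - L3 with hddef
  have h1 : (0.9808:ℝ)^2 < c^2 := by nlinarith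
  have h2 : L2^2 < (0.6931471808:ℝ)^2 := by nlinarith
  have h4 : (0.6931471803:ℝ)^2 < L2^2 := by nlinarith
  have hA : 2*L2^2 < c^2 := by nlinarith [h1, h2]
  have hB : 3*c^2/2*d ≤ L2^2 := by
    have h3 : c^2 < (0.9809:ℝ)^2 := by nlinarith
    nlinarith [h3, h4, hda, hdb, sq_nonneg c]
  set t := Real.exp (-(u*L2)) with htdef
  set s := Real.exp (-(u*c)) with hsdef
  set w := Real.exp (-(u*d)) with hwdef
  clear_value c d t s w
  have htpos : 0 < t := by rw [htdef]; positivity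
  have hspos : 0 < s := by rw [hsdef]; positivity
  have hwpos : 0 < w := by rw [hwdef]; positivity
  have hts : t^2 ≤ s := by
    rw [htdef, hsdef, exp_sq]
    apply Real.exp_le_exp.2
    have : u*c ≤ u*(2*L2) := by
      apply mul_le_mul_of_nonneg_left _ hu0
      rw [hcdef]; linarith
    linarith
  have hchord := convexOn_exp.2 (Set.mem_univ (-L2)) (Set.mem_univ 0) hu0
    (by linarith : (0:ℝ) ≤ 1 - u) (by ring)
  simp only [smul_eq_mul, mul_zero, add_zero, Real.exp_zero, mul_one] at hchord
  rw [hhalf] at hchord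
  have ht' : t ≤ 1 - u/2 := by
    rw [htdef, show -(u*L2) = u * -L2 by ring]; linarith
  have hw : 1 - u*d ≤ w := by
    have := Real.add_one_le_exp (-(u*d))
    rw [hwdef]; linarith
  have hi : L2^2 * t^2 ≤ 3*c^2/4 * s := by
    apply mul_le_mul _ hts (sq_nonneg t) (by positivity)
    nlinarith [hA, sq_nonneg L2]
  have hmid : L2^2*(3-u) < 3*c^2/2*(1-u*d) := by
    nlinarith [hA, mul_nonneg hu0 (by linarith [hB] :
      (0:ℝ) ≤ L2^2 - 3*c^2/2*d)]
  have hii : L2^2*(2*t+1) < 3*c^2/2 * w := by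
    have e1 : L2^2*(2*t+1) ≤ L2^2*(3-u) := by nlinarith [sq_nonneg L2]
    have e2 : 3*c^2/2*(1-u*d) ≤ 3*c^2/2 * w :=
      mul_le_mul_of_nonneg_left hw (by positivity)
    linarith
  nlinarith [hi, hii]

lemma glue (L2 c t E s w : ℝ) (htpos : 0 < t) (hEpos : 0 < E)
    (hE2 : E^2 = s) (hstw : s = t*w)
    (hcore : L2^2*(t+1)^2 < 3*c^2/4*(s+2*w)) (hc : 0 < c) (hL2 : 0 < L2) :
    0 < (2*t^2 * -L2 + 4*t * -(L2/2)) / (2*Real.sqrt (2*t^2+4*t)) +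
      Real.sqrt 6 * (c/4 * E) := by
  have hspos : 0 < s := by rw [← hE2]; positivity
  have hwpos : 0 < w := by nlinarith [htpos, hspos, hstw]
  have hhpos : (0:ℝ) < 2*t^2+4*t := by nlinarith
  have hsh : 0 < Real.sqrt (2*t^2+4*t) := Real.sqrt_pos.2 hhpos
  have key : 2*L2*t^2 + 2*L2*t < Real.sqrt 6 * (c/4*E) * (2*Real.sqrt (2*t^2+4*t)) := by
    apply lt_of_pow_lt_pow_left₀ 2 (by positivity)
    have h1 : (Real.sqrt 6 * (c/4*E) * (2*Real.sqrt (2*t^2+4*t)))^2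
        = 6*((c/4)^2*E^2)*(4*(2*t^2+4*t)) := by
      rw [mul_pow, mul_pow, mul_pow, mul_pow, Real.sq_sqrt (by norm_num : (0:ℝ) ≤ 6),
        Real.sq_sqrt hhpos.le]
      ring
    rw [h1, hE2, hstw]
    have hmul := mul_lt_mul_of_pos_left hcore (by positivity : (0:ℝ) < 4*t^2)
    nlinarith [hmul]
  have hlt : (2*L2*t^2+2*L2*t)/(2*Real.sqrt (2*t^2+4*t)) < Real.sqrt 6 * (c/4*E) := by
    rw [div_lt_iff₀ (by positivity)]; exact key
  have hnum : (2*t^2 * -L2 + 4*t * -(L2/2)) / (2*Real.sqrt (2*t^2+4*t))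
      = -((2*L2*t^2+2*L2*t)/(2*Real.sqrt (2*t^2+4*t))) := by
    rw [← neg_div]; ring_nf
  rw [hnum]; linarith

lemma log_six : Real.log 6 = Real.log 2 + Real.log 3 := by
  rw [show (6:ℝ) = 2*3 by norm_num, Real.log_mul (by norm_num) (by norm_num)]

lemma log_four : Real.log 4 = 2 * Real.log 2 := by
  rw [show (4:ℝ) = 2^2 by norm_num, Real.log_pow]; push_cast; ring

noncomputable def G (α : ℝ) : ℝ :=
  Real.sqrt (Real.exp (Real.log 2 * (1-α)) + Real.exp (Real.log 2 * (2-α/2))) -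
    Real.sqrt 6 * Real.exp (-((3*Real.log 2 - Real.log 3) * (α/4)))

lemma vDiff_eq_G : vDiff = G := by
  funext α
  unfold vDiff G
  have hrad : (2:ℝ)^(1-α) * (3:ℝ)^α * (6:ℝ)^(-(α/2)) + (4:ℝ)^(1-α)*(3:ℝ)^(α/2)*(2:ℝ)^(α/2)
      = 6 * Real.exp (-((3*Real.log 2 - Real.log 3) * (α/2))) := by
    rw [Real.rpow_def_of_pos (by norm_num : (0:ℝ)<2), Real.rpow_def_of_pos (by norm_num : (0:ℝ)<3),
      Real.rpow_def_of_pos (by norm_num : (0:ℝ)<6), Real.rpow_def_of_pos (by norm_num : (0:ℝ)<4),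
      Real.rpow_def_of_pos (by norm_num : (0:ℝ)<3), Real.rpow_def_of_pos (by norm_num : (0:ℝ)<2),
      ← Real.exp_add, ← Real.exp_add, ← Real.exp_add, ← Real.exp_add, log_six, log_four]
    rw [show Real.log 2 * (1-α) + Real.log 3 * α + (Real.log 2 + Real.log 3) * -(α/2)
        = Real.log 2 + -((3*Real.log 2 - Real.log 3) * (α/2)) by ring,
      show 2*Real.log 2 * (1-α) + Real.log 3 * (α/2) + Real.log 2 * (α/2)
        = (Real.log 2 + Real.log 2) + -((3*Real.log 2 - Real.log 3) * (α/2)) by ring,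
      Real.exp_add, Real.exp_add, Real.exp_add, Real.exp_log (by norm_num : (0:ℝ)<2)]
    ring
  rw [hrad, Real.rpow_def_of_pos (by norm_num : (0:ℝ)<2) (1-α),
    Real.rpow_def_of_pos (by norm_num : (0:ℝ)<2) (2-α/2),
    Real.sqrt_mul (by norm_num : (0:ℝ) ≤ 6), ← Real.exp_half,
    show -((3*Real.log 2 - Real.log 3) * (α/2)) / 2 = -((3*Real.log 2 - Real.log 3) * (α/4)) by ring]

noncomputable def G' (α : ℝ) : ℝ :=
  (2*(Real.exp (-(α/2*Real.log 2)))^2 * -(Real.log 2) +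
    4*(Real.exp (-(α/2*Real.log 2))) * -(Real.log 2/2)) /
    (2*Real.sqrt (2*(Real.exp (-(α/2*Real.log 2)))^2 + 4*(Real.exp (-(α/2*Real.log 2))))) +
  Real.sqrt 6 * ((3*Real.log 2 - Real.log 3)/4 *
    Real.exp (-((3*Real.log 2 - Real.log 3) * (α/4))))

lemma exp_form1 (α : ℝ) :
    Real.exp (Real.log 2 * (1-α)) = 2 * Real.exp (-(α/2*Real.log 2))^2 := by
  rw [show Real.log 2 * (1-α) = Real.log 2 + (-(α/2*Real.log 2) + -(α/2*Real.log 2)) by ring,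
    Real.exp_add, Real.exp_add, Real.exp_log (by norm_num : (0:ℝ)<2)]
  ring

lemma exp_form2 (α : ℝ) :
    Real.exp (Real.log 2 * (2-α/2)) = 4 * Real.exp (-(α/2*Real.log 2)) := by
  rw [show Real.log 2 * (2-α/2) = Real.log 2 + (Real.log 2 + -(α/2*Real.log 2)) by ring,
    Real.exp_add, Real.exp_add, Real.exp_log (by norm_num : (0:ℝ)<2)]
  ring

lemma hasDerivAt_G (α : ℝ) : HasDerivAt G (G' α) α := by
  have d1 : HasDerivAt (fun x:ℝ => Real.log 2 * (1-x)) (Real.log 2 * (0-1)) α :=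
    ((hasDerivAt_const α (1:ℝ)).sub (hasDerivAt_id α)).const_mul _
  have d2 : HasDerivAt (fun x:ℝ => Real.log 2 * (2-x/2)) (Real.log 2 * (0-1/2)) α :=
    ((hasDerivAt_const α (2:ℝ)).sub ((hasDerivAt_id α).div_const 2)).const_mul _
  have d3 : HasDerivAt (fun x:ℝ => -((3*Real.log 2 - Real.log 3) * (x/4)))
      (-((3*Real.log 2 - Real.log 3) * (1/4))) α :=
    (((hasDerivAt_id α).div_const 4).const_mul _).neg
  have hpos : (0:ℝ) < Real.exp (Real.log 2 * (1-α)) + Real.exp (Real.log 2 * (2-α/2)) := by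
    positivity
  have H := ((d1.exp.add d2.exp).sqrt hpos.ne').sub ((d3.exp).const_mul (Real.sqrt 6))
  refine H.congr_deriv ?_
  unfold G'
  simp only [Pi.add_apply]
  rw [exp_form1, exp_form2]
  ring

lemma G'_pos (α : ℝ) (h0 : 0 ≤ α) (h2 : α ≤ 2) : 0 < G' α := by
  have l2a := Real.log_two_gt_d9
  have l2b := Real.log_two_lt_d9
  obtain ⟨l3a, l3b⟩ := log_three_bounds
  have hL2 : (0:ℝ) < Real.log 2 := by linarith
  have hc : (0:ℝ) < 3*Real.log 2 - Real.log 3 := by linarith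
  have hcore := core (Real.log 2) (Real.log 3) (α/2) (by linarith) (by linarith) l2a l2b l3a l3b
    (by rw [Real.exp_neg, Real.exp_log (by norm_num : (0:ℝ)<2)]; norm_num)
  have hE2 : Real.exp (-((3*Real.log 2 - Real.log 3) * (α/4)))^2
      = Real.exp (-(α/2*(3*Real.log 2 - Real.log 3))) := by
    rw [exp_sq, Real.exp_eq_exp]; ring
  have hstw : Real.exp (-(α/2*(3*Real.log 2 - Real.log 3)))
      = Real.exp (-(α/2*Real.log 2)) * Real.exp (-(α/2*(2*Real.log 2 - Real.log 3))) := by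
    rw [← Real.exp_add, Real.exp_eq_exp]; ring
  exact glue (Real.log 2) (3*Real.log 2 - Real.log 3) (Real.exp (-(α/2*Real.log 2)))
    (Real.exp (-((3*Real.log 2 - Real.log 3) * (α/4))))
    (Real.exp (-(α/2*(3*Real.log 2 - Real.log 3))))
    (Real.exp (-(α/2*(2*Real.log 2 - Real.log 3))))
    (Real.exp_pos _) (Real.exp_pos _) hE2 hstw hcore hc hL2

lemma G_mono : StrictMonoOn G (Set.Ico (0:ℝ) 2) := by
  apply strictMonoOn_of_deriv_pos (convex_Ico 0 2)
  · exact fun x _ => (hasDerivAt_G x).continuousAt.continuousWithinAt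
  · intro x hx
    rw [interior_Ico] at hx
    rw [(hasDerivAt_G x).deriv]
    exact G'_pos x hx.1.le hx.2.le

end VDiffAux

lemma vDiff_zero : vDiff 0 = 0 := by
  rw [VDiffAux.vDiff_eq_G]
  unfold VDiffAux.G
  norm_num
  rw [Real.exp_log (by norm_num : (0:ℝ)<2),
    show Real.log 2 * 2 = Real.log 2 + Real.log 2 by ring, Real.exp_add,
    Real.exp_log (by norm_num : (0:ℝ)<2)]
  norm_num

/-- `𝓵(0) = 0`, `𝓵` is increasing on `[0,2)`, and `𝓵(α) > 0` for every
`α ∈ (0,2)`. -/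
theorem vDiff_zero_strictMono_pos :
    vDiff 0 = 0 ∧ StrictMonoOn vDiff (Set.Ico (0:ℝ) 2) ∧
      ∀ α ∈ Set.Ioo (0:ℝ) 2, 0 < vDiff α := by
  have hmono : StrictMonoOn vDiff (Set.Ico (0:ℝ) 2) := by
    rw [VDiffAux.vDiff_eq_G]; exact VDiffAux.G_mono
  refine ⟨vDiff_zero, hmono, fun α hα => ?_⟩
  have h := hmono (Set.mem_Ico.2 ⟨le_refl 0, by norm_num⟩)
    (Set.mem_Ico.2 ⟨hα.1.le, hα.2⟩) hα.1
  rw [vDiff_zero] at h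
  exact h
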